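/- Identification with covariates by inverse propensity weighting: let X : Ω → ℝ^k be a measurable covariate vector with generated σ-algebra 𝔪 = σ(X), and suppose: (i) the collection of all potential outcomes (Y(d,d'))_{d,d'} and potential treatment statuses (D_i(z,z'), D_j(z,z'))_{z,z'} is conditionally independent of (Z_i,Z_j) given 𝔪; (ii) almost surely D_k(1,1) ≥ D_k(1,0) ≥ D_k(0,1) ≥ D_k(0,0) and D_k(0,0) = D_k(0,1) = 0 for k ∈ {i,j}; (iii) for each (z,z') ∈ {0,1}², p_{zz'} : Ω → ℝ is an 𝔪-measurable function with p_{zz'} = E[1{Z_i=z, Z_j=z'} | 𝔪] almost surely and p_{zz'} > 0 almost surely. Let g : ℝ × ℝ^k → ℝ be measurable such that all random variables below are integrable. Then: E[ g(Y,X) · (1−Z_i)(1−Z_j) / p_{00} ] = E[ g(Y(0,0), X) ]; E[ g(Y,X) · D_i · Z_i(1−Z_j) / p_{10} ] = E[ g(Y(1,0), X) · 1_{C_i} ]; and E[ g(Y,X) · D_j · (1−Z_i)Z_j / p_{01} ] = E[ g(Y(0,1), X) · 1_{C_j} ], where 1_A denotes the indicator of the event A. -/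

import Mathlib

open MeasureTheory ProbabilityTheory

noncomputable def bInd (b : Bool) : ℝ := if b then 1 else 0

noncomputable def rInd {Ω : Type*} (s : Set Ω) : Ω → ℝ := s.indicator fun _ => 1

lemma rInd_integrable {Ω : Type*} {mΩ : MeasurableSpace Ω} (P : Measure Ω) [IsFiniteMeasure P]
    {s : Set Ω} (hs : MeasurableSet s) : Integrable (rInd s) P := by
  unfold rInd
  rw [integrable_indicator_iff hs]
  exact (integrable_const 1).integrableOn

lemma rInd_aesm {Ω : Type*} {mΩ : MeasurableSpace Ω} (P : Measure Ω)
    {s : Set Ω} (hs : MeasurableSet s) : AEStronglyMeasurable (rInd s) P :=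
  ((stronglyMeasurable_const (b := (1:ℝ))).indicator hs).aestronglyMeasurable

lemma my_integral_indicator {Ω : Type*} {mΩ : MeasurableSpace Ω} (P : Measure Ω)
    {s : Set Ω} (hs : MeasurableSet s) (f : Ω → ℝ) :
    ∫ x, s.indicator f x ∂P = ∫ x in s, f x ∂P := integral_indicator hs

lemma my_integral_add_compl {Ω : Type*} {mΩ : MeasurableSpace Ω} (P : Measure Ω)
    {t : Set Ω} (ht : MeasurableSet t) {f : Ω → ℝ} (hf : Integrable f P) :
    (∫ x in t, f x ∂P) + ∫ x in tᶜ, f x ∂P = ∫ x, f x ∂P := integral_add_compl ht hf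

lemma my_integral_iUnion {Ω : Type*} {mΩ : MeasurableSpace Ω} (P : Measure Ω)
    {s : ℕ → Set Ω} (hm : ∀ i, MeasurableSet (s i)) (hd : Pairwise (Function.onFun Disjoint s))
    {f : Ω → ℝ} (hfi : IntegrableOn f (⋃ i, s i) P) :
    ∫ x in ⋃ n, s n, f x ∂P = ∑' n, ∫ x in s n, f x ∂P := integral_iUnion hm hd hfi

lemma my_integrableOn {Ω : Type*} {mΩ : MeasurableSpace Ω} {P : Measure Ω}
    {f : Ω → ℝ} (hf : Integrable f P) (s : Set Ω) : IntegrableOn f s P := hf.integrableOn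

lemma meas_pair {Ω : Type*} {mΩ : MeasurableSpace Ω} {γ : Type*} [MeasurableSpace γ]
    (f : Bool → Bool → Ω → γ) (hf : ∀ d d', Measurable (f d d')) :
    Measurable fun ω => (fun d d' => f d d' ω) :=
  measurable_pi_lambda _ fun d => measurable_pi_lambda _ fun d' => hf d d'

lemma rInd_bound {Ω : Type*} (s : Set Ω) (x : Ω) : ‖rInd s x‖ ≤ 1 := by
  by_cases hs : x ∈ s <;> simp [rInd, Set.indicator_apply, hs]

lemma key_lemma {Ω : Type*} [mΩ : MeasurableSpace Ω] [StandardBorelSpace Ω] [Nonempty Ω]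
    (P : Measure Ω) [IsProbabilityMeasure P]
    {E : Type*} [mE : MeasurableSpace E] (V : Ω → E) (hV : Measurable V)
    (Z : Ω → Bool × Bool) (hZ : Measurable Z)
    (m : MeasurableSpace Ω) (hm_le : m ≤ mΩ)
    (hCI : CondIndepFun m hm_le V Z P)
    (B : Set Ω) (hB : MeasurableSet[MeasurableSpace.comap Z inferInstance] B)
    (p : Ω → ℝ) (hp : Measurable[m] p)
    (hpc : p =ᵐ[P] P[rInd B|m])
    (hppos : ∀ᵐ ω ∂P, 0 < p ω)
    (H : Ω → ℝ)
    (hH : Measurable[MeasurableSpace.comap V mE ⊔ m] H)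
    (hHint : Integrable H P)
    (F : Ω → ℝ)
    (hF : F =ᵐ[P] fun ω => (H ω / p ω) * rInd B ω)
    (hFint : Integrable F P) :
    ∫ ω, F ω ∂P = ∫ ω, H ω ∂P := by
  have hmV_le : MeasurableSpace.comap V mE ≤ mΩ := measurable_iff_comap_le.mp hV
  have hn_le : MeasurableSpace.comap V mE ⊔ m ≤ mΩ := sup_le hmV_le hm_le
  have hB' : MeasurableSet[mΩ] B := (measurable_iff_comap_le.mp hZ) _ hB
  have hiB : Integrable (rInd B) P := rInd_integrable P hB'
  -- conditional independence in terms of condExp of indicators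
  have hCI' : ∀ A : Set Ω, MeasurableSet[MeasurableSpace.comap V mE] A →
      P[rInd (A ∩ B)|m] =ᵐ[P] P[rInd A|m] * P[rInd B|m] := by
    intro A hA
    have := (condIndepFun_iff m hm_le V Z hV hZ P).mp hCI A B hA hB
    exact this
  -- the σ-algebra is generated by the π-system of intersections
  have hgen : MeasurableSpace.comap V mE ⊔ m = MeasurableSpace.generateFrom
      {s | ∃ A, MeasurableSet[MeasurableSpace.comap V mE] A ∧
        ∃ C, MeasurableSet[m] C ∧ s = A ∩ C} := by
    refine le_antisymm (sup_le ?_ ?_) (MeasurableSpace.generateFrom_le ?_)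
    · intro A hA
      exact MeasurableSpace.measurableSet_generateFrom ⟨A, hA, Set.univ, MeasurableSet.univ,
        (Set.inter_univ A).symm⟩
    · intro C hC
      exact MeasurableSpace.measurableSet_generateFrom ⟨Set.univ, MeasurableSet.univ, C, hC,
        (Set.univ_inter C).symm⟩
    · rintro s ⟨A, hA, C, hC, rfl⟩
      exact MeasurableSet.inter (le_sup_left (α := MeasurableSpace Ω) _ hA)
        (le_sup_right (α := MeasurableSpace Ω) _ hC)
  have hpi : IsPiSystem {s | ∃ A, MeasurableSet[MeasurableSpace.comap V mE] A ∧
      ∃ C, MeasurableSet[m] C ∧ s = A ∩ C} := by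
    rintro s ⟨A1, hA1, C1, hC1, rfl⟩ t ⟨A2, hA2, C2, hC2, rfl⟩ _
    exact ⟨A1 ∩ A2, hA1.inter hA2, C1 ∩ C2, hC1.inter hC2, by ext x; simp; tauto⟩
  -- Step A : P[1_B | n] = P[1_B | m]
  have hq_eq : ∀ s : Set Ω, MeasurableSet[MeasurableSpace.comap V mE ⊔ m] s →
      ∫ x in s, (P[rInd B|m]) x ∂P = ∫ x in s, rInd B x ∂P := by
    intro s hs
    refine MeasurableSpace.induction_on_inter (m := MeasurableSpace.comap V mE ⊔ m)
      (C := fun s _ => ∫ x in s, (P[rInd B|m]) x ∂P = ∫ x in s, rInd B x ∂P)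
      hgen hpi ?_ ?_ ?_ ?_ s hs
    · simp
    · rintro t ⟨A, hA, C, hC, rfl⟩
      have hA' : MeasurableSet[mΩ] A := hmV_le _ hA
      have hC' : MeasurableSet[mΩ] C := hm_le _ hC
      have hiA : Integrable (rInd A) P := rInd_integrable P hA'
      have hq_int : Integrable (P[rInd B|m]) P := integrable_condExp
      have hf1 : StronglyMeasurable[m] (fun x => rInd C x * (P[rInd B|m]) x) :=
        ((stronglyMeasurable_const (b := (1:ℝ))).indicator hC).mul stronglyMeasurable_condExp
      have hint1 : Integrable (fun x => (rInd C x * rInd A x) * (P[rInd B|m]) x) P := by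
        refine hq_int.bdd_mul (c := 1) ?_ (Filter.Eventually.of_forall fun x => ?_)
        · exact (rInd_aesm P hC').mul (rInd_aesm P hA')
        · by_cases h1 : x ∈ C <;> by_cases h2 : x ∈ A <;>
            simp [rInd, Set.indicator_apply, h1, h2]
      have hint1' : Integrable ((fun x => rInd C x * (P[rInd B|m]) x) * rInd A) P := by
        refine hint1.congr (Filter.Eventually.of_forall fun x => ?_)
        simp only [Pi.mul_apply]; ring
      have pull1 : P[(fun x => rInd C x * (P[rInd B|m]) x) * rInd A|m]
          =ᵐ[P] (fun x => rInd C x * (P[rInd B|m]) x) * P[rInd A|m] :=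
        condExp_mul_of_stronglyMeasurable_left hf1 hint1' hiA
      have hiAB : Integrable (rInd (A ∩ B)) P := rInd_integrable P (hA'.inter hB')
      have hint2 : Integrable (rInd C * rInd (A ∩ B)) P := by
        exact hiAB.bdd_mul (c := 1) (rInd_aesm P hC') (Filter.Eventually.of_forall fun x => rInd_bound _ _)
      have pull2 : P[rInd C * rInd (A ∩ B)|m] =ᵐ[P] rInd C * P[rInd (A ∩ B)|m] :=
        condExp_mul_of_stronglyMeasurable_left
          ((stronglyMeasurable_const (b := (1:ℝ))).indicator hC) hint2 hiAB
      have hCIa := hCI' A hA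
      calc ∫ x in A ∩ C, (P[rInd B|m]) x ∂P
          = ∫ x, (A ∩ C).indicator (fun x => (P[rInd B|m]) x) x ∂P :=
            (my_integral_indicator P (hA'.inter hC') _).symm
        _ = ∫ x, ((fun x => rInd C x * (P[rInd B|m]) x) * rInd A) x ∂P := by
            refine integral_congr_ae (Filter.Eventually.of_forall fun x => ?_)
            by_cases hx1 : x ∈ A <;> by_cases hx2 : x ∈ C <;>
              simp [rInd, Set.indicator_apply, hx1, hx2]
        _ = ∫ x, (P[(fun x => rInd C x * (P[rInd B|m]) x) * rInd A|m]) x ∂P :=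
            (integral_condExp hm_le).symm
        _ = ∫ x, (rInd C * P[rInd (A ∩ B)|m]) x ∂P := by
            refine integral_congr_ae ?_
            filter_upwards [pull1, hCIa, pull2] with x h1 h2 h3
            rw [h1]
            simp only [Pi.mul_apply] at h2 h3 ⊢
            rw [mul_assoc, mul_comm ((P[rInd B|m]) x), ← h2]
        _ = ∫ x, (P[rInd C * rInd (A ∩ B)|m]) x ∂P :=
            (integral_congr_ae pull2).symm
        _ = ∫ x, (rInd C * rInd (A ∩ B)) x ∂P := integral_condExp hm_le
        _ = ∫ x, (A ∩ C).indicator (fun x => rInd B x) x ∂P := by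
            refine integral_congr_ae (Filter.Eventually.of_forall fun x => ?_)
            by_cases hx1 : x ∈ A <;> by_cases hx2 : x ∈ C <;> by_cases hx3 : x ∈ B <;>
              simp [rInd, Set.indicator_apply, hx1, hx2, hx3]
        _ = ∫ x in A ∩ C, rInd B x ∂P := my_integral_indicator P (hA'.inter hC') _
    · intro t ht hq
      have ht' : MeasurableSet[mΩ] t := hn_le _ ht
      have h1 : (∫ x in t, (P[rInd B|m]) x ∂P) + ∫ x in tᶜ, (P[rInd B|m]) x ∂P
          = ∫ x, (P[rInd B|m]) x ∂P := my_integral_add_compl P ht' integrable_condExp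
      have h2 : (∫ x in t, rInd B x ∂P) + ∫ x in tᶜ, rInd B x ∂P
          = ∫ x, rInd B x ∂P := my_integral_add_compl P ht' hiB
      have h3 : ∫ x, (P[rInd B|m]) x ∂P = ∫ x, rInd B x ∂P := integral_condExp hm_le
      linarith
    · intro f hdisj hmeas hC
      have hmeas' : ∀ i, MeasurableSet[mΩ] (f i) := fun i => hn_le _ (hmeas i)
      have e1 : ∫ x in ⋃ i, f i, (P[rInd B|m]) x ∂P
          = ∑' i, ∫ x in f i, (P[rInd B|m]) x ∂P :=
        my_integral_iUnion P hmeas' hdisj (my_integrableOn integrable_condExp _)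
      have e2 : ∫ x in ⋃ i, f i, rInd B x ∂P = ∑' i, ∫ x in f i, rInd B x ∂P :=
        my_integral_iUnion P hmeas' hdisj (my_integrableOn hiB _)
      rw [e1, e2]
      exact tsum_congr hC
  have hqn : P[rInd B|m] =ᵐ[P] P[rInd B|MeasurableSpace.comap V mE ⊔ m] := by
    refine ae_eq_condExp_of_forall_setIntegral_eq hn_le hiB
      (fun s _ _ => my_integrableOn integrable_condExp s) (fun s hs _ => hq_eq s hs) ?_
    exact ⟨P[rInd B|m], stronglyMeasurable_condExp.mono le_sup_right, Filter.EventuallyEq.rfl⟩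
  -- Step B
  have hGsm : StronglyMeasurable[MeasurableSpace.comap V mE ⊔ m] (fun ω => H ω / p ω) :=
    (hH.div (hp.mono le_sup_right le_rfl)).stronglyMeasurable
  have hGBint : Integrable ((fun ω => H ω / p ω) * rInd B) P := by
    refine hFint.congr (hF.mono fun x hx => ?_)
    rw [hx]; rfl
  have pull : P[(fun ω => H ω / p ω) * rInd B|MeasurableSpace.comap V mE ⊔ m]
      =ᵐ[P] (fun ω => H ω / p ω) * P[rInd B|MeasurableSpace.comap V mE ⊔ m] :=
    condExp_mul_of_stronglyMeasurable_left hGsm hGBint hiB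
  have hfinal : P[(fun ω => H ω / p ω) * rInd B|MeasurableSpace.comap V mE ⊔ m] =ᵐ[P] H := by
    filter_upwards [pull, hqn, hpc, hppos] with x h1 h2 h3 h4
    rw [h1]
    simp only [Pi.mul_apply]
    rw [← h2, ← h3]
    field_simp
  calc ∫ ω, F ω ∂P = ∫ ω, ((fun ω => H ω / p ω) * rInd B) ω ∂P := integral_congr_ae hF
    _ = ∫ ω, (P[(fun ω => H ω / p ω) * rInd B|MeasurableSpace.comap V mE ⊔ m]) ω ∂P :=
        (integral_condExp hn_le).symm
    _ = ∫ ω, H ω ∂P := integral_congr_ae hfinal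


theorem stmt_15
    {Ω : Type*} [mΩ : MeasurableSpace Ω] [StandardBorelSpace Ω] [Nonempty Ω]
    (P : Measure Ω) [IsProbabilityMeasure P]
    {k : ℕ} (X : Ω → (Fin k → ℝ)) (hX : Measurable X)
    (Y : Bool → Bool → Ω → ℝ) (Di Dj : Bool → Bool → Ω → Bool)
    (Zi Zj : Ω → Bool)
    (hYmeas : ∀ d d', Measurable (Y d d'))
    (hDimeas : ∀ z z', Measurable (Di z z'))
    (hDjmeas : ∀ z z', Measurable (Dj z z'))
    (hZi : Measurable Zi) (hZj : Measurable Zj)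
    (m : MeasurableSpace Ω)
    (hm_def : m = MeasurableSpace.comap X inferInstance)
    (hm_le : m ≤ mΩ)
    (hCI : CondIndepFun m hm_le
      (fun ω => ((fun d d' => Y d d' ω),
                 (fun z z' => Di z z' ω),
                 (fun z z' => Dj z z' ω)))
      (fun ω => (Zi ω, Zj ω)) P)
    (hmono : ∀ᵐ ω ∂P,
      (Di false false ω ≤ Di false true ω ∧ Di false true ω ≤ Di true false ω ∧
        Di true false ω ≤ Di true true ω) ∧
      (Dj false false ω ≤ Dj false true ω ∧ Dj false true ω ≤ Dj true false ω ∧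
        Dj true false ω ≤ Dj true true ω))
    (hosn : ∀ᵐ ω ∂P,
      Di false false ω = false ∧ Di false true ω = false ∧
      Dj false false ω = false ∧ Dj false true ω = false)
    (p : Bool → Bool → Ω → ℝ)
    (hpmeas : ∀ z z', Measurable[m] (p z z'))
    (hpcond : ∀ z z', p z z' =ᵐ[P]
      P[(fun ω => Set.indicator ({x | Zi x = z} ∩ {x | Zj x = z'}) (fun _ => (1:ℝ)) ω)|m])
    (hppos : ∀ z z', ∀ᵐ ω ∂P, 0 < p z z' ω)
    (g : ℝ × (Fin k → ℝ) → ℝ) (hg : Measurable g)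
    (hint1 : Integrable (fun ω => g ((Y (Di (Zi ω) (Zj ω) ω) (Dj (Zj ω) (Zi ω) ω) ω), X ω) * (1 - bInd (Zi ω)) * (1 - bInd (Zj ω)) / p false false ω) P)
    (hint2 : Integrable (fun ω => g ((Y (Di (Zi ω) (Zj ω) ω) (Dj (Zj ω) (Zi ω) ω) ω), X ω) * bInd (Di (Zi ω) (Zj ω) ω) * bInd (Zi ω) * (1 - bInd (Zj ω)) / p true false ω) P)
    (hint3 : Integrable (fun ω => g ((Y (Di (Zi ω) (Zj ω) ω) (Dj (Zj ω) (Zi ω) ω) ω), X ω) * bInd (Dj (Zj ω) (Zi ω) ω) * (1 - bInd (Zi ω)) * bInd (Zj ω) / p false true ω) P)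
    (hint4 : Integrable (fun ω => g (Y false false ω, X ω)) P)
    (hint5 : Integrable (fun ω => g (Y true false ω, X ω) * Set.indicator ({x | Di true false x = true ∧ Di false true x = false}) (fun _ => (1:ℝ)) ω) P)
    (hint6 : Integrable (fun ω => g (Y false true ω, X ω) * Set.indicator ({x | Dj true false x = true ∧ Dj false true x = false}) (fun _ => (1:ℝ)) ω) P)
    :
    (∫ ω, g ((Y (Di (Zi ω) (Zj ω) ω) (Dj (Zj ω) (Zi ω) ω) ω), X ω) * (1 - bInd (Zi ω)) * (1 - bInd (Zj ω)) / p false false ω ∂P) = (∫ ω, g (Y false false ω, X ω) ∂P)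
    ∧ (∫ ω, g ((Y (Di (Zi ω) (Zj ω) ω) (Dj (Zj ω) (Zi ω) ω) ω), X ω) * bInd (Di (Zi ω) (Zj ω) ω) * bInd (Zi ω) * (1 - bInd (Zj ω)) / p true false ω ∂P) = (∫ ω, g (Y true false ω, X ω) * Set.indicator ({x | Di true false x = true ∧ Di false true x = false}) (fun _ => (1:ℝ)) ω ∂P)
    ∧ (∫ ω, g ((Y (Di (Zi ω) (Zj ω) ω) (Dj (Zj ω) (Zi ω) ω) ω), X ω) * bInd (Dj (Zj ω) (Zi ω) ω) * (1 - bInd (Zi ω)) * bInd (Zj ω) / p false true ω ∂P) = (∫ ω, g (Y false true ω, X ω) * Set.indicator ({x | Dj true false x = true ∧ Dj false true x = false}) (fun _ => (1:ℝ)) ω ∂P) := by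
  have hV : Measurable[mΩ] (fun ω =>
      ((fun d d' => Y d d' ω ),
       (fun z z' => Di z z' ω),
       (fun z z' => Dj z z' ω))) := by
    exact Measurable.prod (meas_pair Y hYmeas)
      (Measurable.prod (meas_pair Di hDimeas) (meas_pair Dj hDjmeas))
  have hZ : Measurable[mΩ] (fun ω => (Zi ω, Zj ω)) := hZi.prodMk hZj
  -- measurability of the components with respect to comap V ⊔ m
  have hVc : Measurable[MeasurableSpace.comap (fun ω =>
      ((fun d d' => Y d d' ω ),
       (fun z z' => Di z z' ω),
       (fun z z' => Dj z z' ω))) inferInstance]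
      (fun ω =>
      ((fun d d' => Y d d' ω ),
       (fun z z' => Di z z' ω),
       (fun z z' => Dj z z' ω))) := Measurable.of_comap_le le_rfl
  have hYc : ∀ d d', Measurable[MeasurableSpace.comap (fun ω =>
      ((fun d d' => Y d d' ω ),
       (fun z z' => Di z z' ω),
       (fun z z' => Dj z z' ω))) inferInstance ⊔ m] (Y d d') := by
    intro d d'
    have : Measurable fun (v : (Bool → Bool → ℝ) × (Bool → Bool → Bool) ×
        (Bool → Bool → Bool)) => v.1 d d' :=
      (measurable_pi_apply d').comp ((measurable_pi_apply d).comp measurable_fst)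
    exact (this.comp hVc).mono le_sup_left le_rfl
  have hDic : ∀ z z', Measurable[MeasurableSpace.comap (fun ω =>
      ((fun d d' => Y d d' ω ),
       (fun z z' => Di z z' ω),
       (fun z z' => Dj z z' ω))) inferInstance ⊔ m] (Di z z') := by
    intro z z'
    have : Measurable fun (v : (Bool → Bool → ℝ) × (Bool → Bool → Bool) ×
        (Bool → Bool → Bool)) => v.2.1 z z' :=
      (measurable_pi_apply z').comp ((measurable_pi_apply z).comp
        (measurable_fst.comp measurable_snd))
    exact (this.comp hVc).mono le_sup_left le_rfl
  have hDjc : ∀ z z', Measurable[MeasurableSpace.comap (fun ω =>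
      ((fun d d' => Y d d' ω ),
       (fun z z' => Di z z' ω),
       (fun z z' => Dj z z' ω))) inferInstance ⊔ m] (Dj z z') := by
    intro z z'
    have : Measurable fun (v : (Bool → Bool → ℝ) × (Bool → Bool → Bool) ×
        (Bool → Bool → Bool)) => v.2.2 z z' :=
      (measurable_pi_apply z').comp ((measurable_pi_apply z).comp
        (measurable_snd.comp measurable_snd))
    exact (this.comp hVc).mono le_sup_left le_rfl
  have hXc : Measurable[MeasurableSpace.comap (fun ω =>
      ((fun d d' => Y d d' ω ),
       (fun z z' => Di z z' ω),
       (fun z z' => Dj z z' ω))) inferInstance ⊔ m] X := by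
    have hXm : Measurable[m] X := by
      rw [hm_def]; exact Measurable.of_comap_le le_rfl
    exact hXm.mono le_sup_right le_rfl
  -- the instrument events
  have hBmeas : ∀ z z' : Bool, MeasurableSet[MeasurableSpace.comap
      (fun ω => (Zi ω, Zj ω)) inferInstance] ({x | Zi x = z} ∩ {x | Zj x = z'}) := by
    intro z z'
    refine ⟨{(z, z')}, measurableSet_singleton _, ?_⟩
    ext x
    simp [Set.mem_preimage, Prod.ext_iff]
  refine ⟨?_, ?_, ?_⟩
  · -- part 1
    refine key_lemma (mΩ := mΩ) P _ hV _ hZ m hm_le hCI _ (hBmeas false false) _ (hpmeas false false)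
      (hpcond false false) (hppos false false) (fun ω => g (Y false false ω, X ω))
      ((hg.comp ((hYc false false).prodMk hXc))) hint4 _ ?_ hint1
    filter_upwards [hosn] with ω h
    obtain ⟨h1, h2, h3, h4⟩ := h
    cases hzi : Zi ω <;> cases hzj : Zj ω <;>
      simp [bInd, hzi, hzj, rInd, Set.indicator_apply, h1, h2, h3, h4]
  · -- part 2
    refine key_lemma (mΩ := mΩ) P _ hV _ hZ m hm_le hCI _ (hBmeas true false) _ (hpmeas true false)
      (hpcond true false) (hppos true false)
      (fun ω => g (Y true false ω, X ω) *
        Set.indicator ({x | Di true false x = true ∧ Di false true x = false})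
          (fun _ => (1:ℝ)) ω) ?_ hint5 _ ?_ hint2
    · refine (hg.comp ((hYc true false).prodMk hXc)).mul ?_
      refine Measurable.indicator measurable_const ?_
      have : {x | Di true false x = true ∧ Di false true x = false} =
          (Di true false) ⁻¹' {true} ∩ (Di false true) ⁻¹' {false} := by
        ext x; simp [Set.mem_preimage]
      rw [this]
      exact ((hDic true false) (measurableSet_singleton true)).inter
        ((hDic false true) (measurableSet_singleton false))
    · filter_upwards [hosn] with ω h
      obtain ⟨h1, h2, h3, h4⟩ := h
      cases hzi : Zi ω <;> cases hzj : Zj ω <;>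
        cases hd : Di true false ω <;>
          simp [bInd, hzi, hzj, hd, rInd, Set.indicator_apply, h1, h2, h3, h4]
  · -- part 3
    refine key_lemma (mΩ := mΩ) P _ hV _ hZ m hm_le hCI _ (hBmeas false true) _ (hpmeas false true)
      (hpcond false true) (hppos false true)
      (fun ω => g (Y false true ω, X ω) *
        Set.indicator ({x | Dj true false x = true ∧ Dj false true x = false})
          (fun _ => (1:ℝ)) ω) ?_ hint6 _ ?_ hint3
    · refine (hg.comp ((hYc false true).prodMk hXc)).mul ?_
      refine Measurable.indicator measurable_const ?_
      have : {x | Dj true false x = true ∧ Dj false true x = false} =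
          (Dj true false) ⁻¹' {true} ∩ (Dj false true) ⁻¹' {false} := by
        ext x; simp [Set.mem_preimage]
      rw [this]
      exact ((hDjc true false) (measurableSet_singleton true)).inter
        ((hDjc false true) (measurableSet_singleton false))
    · filter_upwards [hosn] with ω h
      obtain ⟨h1, h2, h3, h4⟩ := h
      cases hzi : Zi ω <;> cases hzj : Zj ω <;>
        cases hd : Dj true false ω <;>
          simp [bInd, hzi, hzj, hd, rInd, Set.indicator_apply, h1, h2, h3, h4]
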